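/- (Proposition 1) If c is an optimal arrangement of A, then c_1 = a_1, the smallest element of A. Equivalently, any arrangement c with c_1 ≠ a_1 is not optimal. -/

import Mathlib

open Finset

/-- Partial sums of the sequence `c` (1-indexed): `partSum c k = c 1 + ⋯ + c k`. -/
noncomputable def partSum (c : ℕ → ℝ) (k : ℕ) : ℝ := ∑ i ∈ Finset.Icc 1 k, c i

/-- The mean `S̄` of the partial sums `s_1, …, s_n`. -/
noncomputable def meanPS (n : ℕ) (c : ℕ → ℝ) : ℝ :=
  (1 / (n : ℝ)) * ∑ k ∈ Finset.Icc 1 n, partSum c k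

/-- The variance `f(c)` of the partial sums `s_1, …, s_n`. -/
noncomputable def varPS (n : ℕ) (c : ℕ → ℝ) : ℝ :=
  (1 / (n : ℝ)) * ∑ k ∈ Finset.Icc 1 n, (partSum c k - meanPS n c) ^ 2

/-- The `(i,j)`-partial mean `μ_{ij}(S) = (1/(j-i)) ∑_{k=i}^{j-1} s_k`. -/
noncomputable def partMean (c : ℕ → ℝ) (i j : ℕ) : ℝ :=
  (1 / ((j : ℝ) - (i : ℝ))) * ∑ k ∈ Finset.Icc i (j - 1), partSum c k

/-- The `(i,j)`-interchange of `c`: swap the entries in positions `i` and `j`. -/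
noncomputable def swapSeq (c : ℕ → ℝ) (i j : ℕ) : ℕ → ℝ := fun k => c (Equiv.swap i j k)

/-- `c` is an arrangement (permutation) of `a` on the index range `1..n`. -/
def IsArrangement (n : ℕ) (a c : ℕ → ℝ) : Prop :=
  ∃ σ : ℕ → ℕ, Set.BijOn σ (Set.Icc 1 n) (Set.Icc 1 n) ∧
    ∀ k ∈ Set.Icc 1 n, c k = a (σ k)

/-- The dual sequence `c^d = (c_1, c_n, c_{n-1}, …, c_2)`. -/
noncomputable def dualSeq (n : ℕ) (c : ℕ → ℝ) : ℕ → ℝ :=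
  fun k => if 2 ≤ k then c (n + 2 - k) else c k

lemma icc_split (a b c : ℕ) (hab : a ≤ b + 1) (hbc : b ≤ c) (f : ℕ → ℝ) :
    ∑ k ∈ Finset.Icc a c, f k = ∑ k ∈ Finset.Icc a b, f k + ∑ k ∈ Finset.Icc (b+1) c, f k := by
  rw [← Finset.sum_union]
  · congr 1; ext k; simp only [Finset.mem_union, Finset.mem_Icc]; omega
  · rw [Finset.disjoint_left]; intro k hk hk'
    simp only [Finset.mem_Icc] at hk hk'; omega

lemma partSum_swap (c : ℕ → ℝ) (j k : ℕ) (hj : 2 ≤ j) :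
    partSum (swapSeq c 1 j) k =
      if 1 ≤ k ∧ k < j then partSum c k + (c j - c 1) else partSum c k := by
  unfold partSum swapSeq
  by_cases hk : 1 ≤ k ∧ k < j
  · rw [if_pos hk]
    obtain ⟨hk1, hkj⟩ := hk
    have h1 : Finset.Icc 1 k = insert 1 (Finset.Icc 2 k) := by
      ext i; simp only [Finset.mem_insert, Finset.mem_Icc]; omega
    rw [h1, Finset.sum_insert (by simp), Finset.sum_insert (by simp)]
    rw [Equiv.swap_apply_left]
    rw [Finset.sum_congr rfl (fun i hi => by
      simp only [Finset.mem_Icc] at hi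
      rw [Equiv.swap_apply_of_ne_of_ne (by omega) (by omega)])]
    ring
  · rw [if_neg hk]
    push_neg at hk
    by_cases hk1 : 1 ≤ k
    · have hjk : j ≤ k := hk hk1
      refine Equiv.Perm.sum_comp _ _ _ ?_
      intro x hx
      simp only [Set.mem_setOf_eq] at hx
      have hx' : x = 1 ∨ x = j := by
        by_contra h; push_neg at h
        exact hx (Equiv.swap_apply_of_ne_of_ne h.1 h.2)
      simp only [Finset.coe_Icc, Set.mem_Icc]
      rcases hx' with rfl | rfl <;> omega
    · have : k = 0 := by omega
      subst this; simp

lemma varPS_eq (n : ℕ) (hn : 0 < n) (c : ℕ → ℝ) :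
    varPS n c = (∑ k ∈ Finset.Icc 1 n, (partSum c k)^2) / n
      - ((∑ k ∈ Finset.Icc 1 n, partSum c k) / n)^2 := by
  have hcard : (Finset.Icc 1 n).card = n := by rw [Nat.card_Icc]; omega
  have hn' : (n:ℝ) ≠ 0 := Nat.cast_ne_zero.mpr hn.ne'
  unfold varPS meanPS
  set T := ∑ k ∈ Finset.Icc 1 n, partSum c k with hT
  have expand : ∑ k ∈ Finset.Icc 1 n, (partSum c k - 1/(n:ℝ) * T)^2
      = ∑ k ∈ Finset.Icc 1 n, ((partSum c k)^2 - 2*(1/(n:ℝ)*T)*partSum c k + (1/(n:ℝ)*T)^2) := by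
    apply Finset.sum_congr rfl; intros; ring
  rw [expand, Finset.sum_add_distrib, Finset.sum_sub_distrib, Finset.sum_const, hcard,
    ← Finset.mul_sum, ← hT]
  field_simp
  have hinv : (n:ℝ) * ((n:ℝ) * (T^2 / (n:ℝ)^2)) = T^2 := by
    rw [← mul_assoc, ← pow_two, mul_div_assoc', mul_comm, mul_div_assoc,
      div_self (pow_ne_zero 2 hn'), mul_one]
  rw [nsmul_eq_mul, hinv]
  ring

/-- Proposition 1: in an optimal arrangement the smallest element comes first. -/
theorem optimal_first_is_smallest (n : ℕ) (hn : 2 ≤ n) (a : ℕ → ℝ)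
    (ha1 : 0 < a 1) (ha : ∀ i j, 1 ≤ i → i < j → j ≤ n → a i < a j)
    (c : ℕ → ℝ) (hc : IsArrangement n a c)
    (hopt : ∀ c'', IsArrangement n a c'' → varPS n c'' ≤ varPS n c) :
    c 1 = a 1 := by
  obtain ⟨σ, hσbij, hσ⟩ := hc
  have h1mem : (1:ℕ) ∈ Set.Icc 1 n := ⟨le_rfl, by omega⟩
  have haPos : ∀ i, 1 ≤ i → i ≤ n → 0 < a i := by
    intro i h1 h2
    rcases eq_or_lt_of_le h1 with h | h
    · rwa [← h]
    · exact ha1.trans (ha 1 i le_rfl h h2)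
  have hcPos : ∀ i, 1 ≤ i → i ≤ n → 0 < c i := by
    intro i h1 h2
    rw [hσ i ⟨h1, h2⟩]
    have hm := hσbij.mapsTo ⟨h1, h2⟩
    exact haPos _ hm.1 hm.2
  by_contra hne
  have hσ1 : σ 1 ≠ 1 := fun h => hne (by rw [hσ 1 h1mem, h])
  have hc1 : a 1 < c 1 := by
    rw [hσ 1 h1mem]
    have hm := hσbij.mapsTo h1mem
    exact ha 1 (σ 1) le_rfl (lt_of_le_of_ne hm.1 (Ne.symm hσ1)) hm.2
  obtain ⟨j, hjmem, hσj⟩ := hσbij.surjOn h1mem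
  have hj1 : j ≠ 1 := fun h => hσ1 (h ▸ hσj)
  have hj2 : 2 ≤ j := by rcases hjmem with ⟨h, _⟩; omega
  have hjn : j ≤ n := hjmem.2
  have hcj : c j = a 1 := by rw [hσ j hjmem, hσj]
  -- arrangement property of the swap
  have hswapMem : ∀ k ∈ Set.Icc 1 n, Equiv.swap 1 j k ∈ Set.Icc (1:ℕ) n := by
    intro k hk
    rcases eq_or_ne k 1 with rfl | h
    · rw [Equiv.swap_apply_left]; exact ⟨by omega, hjn⟩
    rcases eq_or_ne k j with rfl | h'
    · rw [Equiv.swap_apply_right]; exact ⟨le_rfl, by omega⟩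
    · rw [Equiv.swap_apply_of_ne_of_ne h h']; exact hk
  have harr : IsArrangement n a (swapSeq c 1 j) := by
    refine ⟨fun k => σ (Equiv.swap 1 j k), ?_, ?_⟩
    · exact hσbij.comp ⟨hswapMem,
        fun x _ y _ h => (Equiv.swap 1 j).injective h,
        fun y hy => ⟨Equiv.swap 1 j y, hswapMem y hy, Equiv.swap_apply_self _ _ _⟩⟩
    · intro k hk
      exact hσ _ (hswapMem k hk)
  -- notation
  set s := partSum c with hs
  set d : ℝ := c j - c 1 with hdDef
  have hd : d < 0 := by rw [hdDef, hcj]; linarith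
  set mR : ℝ := (j : ℝ) - 1 with hmR
  have hm1 : (1:ℝ) ≤ mR := by
    have h2j : (2:ℝ) ≤ (j:ℝ) := by exact_mod_cast hj2
    rw [hmR]; linarith
  have hmn : mR ≤ (n:ℝ) - 1 := by
    have hjnr : (j:ℝ) ≤ (n:ℝ) := by exact_mod_cast hjn
    rw [hmR]; linarith
  have hcardm : ((Finset.Icc 1 (j-1)).card : ℝ) = mR := by
    rw [Nat.card_Icc, hmR]
    have : j - 1 + 1 - 1 = j - 1 := by omega
    rw [this, Nat.cast_sub (by omega), Nat.cast_one]
  set U := ∑ k ∈ Finset.Icc 1 (j-1), s k with hU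
  set V := ∑ k ∈ Finset.Icc j n, s k with hV
  set T := ∑ k ∈ Finset.Icc 1 n, s k with hT
  set Q := ∑ k ∈ Finset.Icc 1 n, (s k)^2 with hQ
  have hj' : j - 1 + 1 = j := by omega
  have hTsplit : T = U + V := by
    rw [hT, hU, hV, icc_split 1 (j-1) n (by omega) (by omega), hj']
  -- monotonicity of partial sums
  have hmono : ∀ k1 k2 : ℕ, k1 ≤ k2 → k2 ≤ n → s k1 ≤ s k2 := by
    intro k1 k2 h1 h2
    rw [hs]
    unfold partSum
    rw [icc_split 1 k1 k2 (by omega) h1]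
    have : 0 ≤ ∑ k ∈ Finset.Icc (k1+1) k2, c k :=
      Finset.sum_nonneg fun i hi => by
        simp only [Finset.mem_Icc] at hi
        exact (hcPos i (by omega) (by omega)).le
    linarith
  have hstep : s (j-1) < s j := by
    have : s j = s (j-1) + c j := by
      rw [hs]; unfold partSum
      rw [icc_split 1 (j-1) j (by omega) (by omega), hj', Finset.Icc_self,
        Finset.sum_singleton]
    rw [this, hcj]; linarith
  -- bounds on U and V
  have hUb : U ≤ mR * s (j-1) := by
    calc U ≤ ∑ k ∈ Finset.Icc 1 (j-1), s (j-1) :=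
          Finset.sum_le_sum fun k hk => by
            simp only [Finset.mem_Icc] at hk
            exact hmono k (j-1) hk.2 (by omega)
      _ = mR * s (j-1) := by rw [Finset.sum_const, nsmul_eq_mul, hcardm]
  have hVb : ((n:ℝ) - mR) * s j ≤ V := by
    have hcardjn : ((Finset.Icc j n).card : ℝ) = (n:ℝ) - mR := by
      rw [Nat.card_Icc, hmR, Nat.cast_sub (by omega)]
      push_cast; ring
    calc ((n:ℝ) - mR) * s j = ∑ k ∈ Finset.Icc j n, s j := by
          rw [Finset.sum_const, nsmul_eq_mul, hcardjn]
      _ ≤ V := Finset.sum_le_sum fun k hk => by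
          simp only [Finset.mem_Icc] at hk
          exact hmono j k hk.1 hk.2
  have hsjpos : 0 < s j - s (j-1) := by linarith
  have hnUT : (n:ℝ) * U < mR * T := by
    have h1 : ((n:ℝ) - mR) * U ≤ ((n:ℝ) - mR) * (mR * s (j-1)) := by
      apply mul_le_mul_of_nonneg_left hUb; linarith
    have h2 : mR * (((n:ℝ) - mR) * s j) ≤ mR * V := by
      apply mul_le_mul_of_nonneg_left hVb; linarith
    have h3 : ((n:ℝ) - mR) * (mR * s (j-1)) < mR * (((n:ℝ) - mR) * s j) := by
      have : 0 < mR * ((n:ℝ) - mR) := by nlinarith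
      nlinarith
    nlinarith [hTsplit]
  -- sums for the swapped sequence
  have hpsw : ∀ k, partSum (swapSeq c 1 j) k =
      if 1 ≤ k ∧ k < j then s k + d else s k := fun k => partSum_swap c j k hj2
  have hT'' : ∑ k ∈ Finset.Icc 1 n, partSum (swapSeq c 1 j) k = T + mR * d := by
    rw [icc_split 1 (j-1) n (by omega) (by omega), hj']
    have e1 : ∑ k ∈ Finset.Icc 1 (j-1), partSum (swapSeq c 1 j) k
        = U + mR * d := by
      rw [hU, Finset.sum_congr rfl (fun k hk => by
        simp only [Finset.mem_Icc] at hk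
        rw [hpsw k, if_pos ⟨hk.1, by omega⟩]),
        Finset.sum_add_distrib, Finset.sum_const, nsmul_eq_mul, hcardm]
    have e2 : ∑ k ∈ Finset.Icc j n, partSum (swapSeq c 1 j) k = V := by
      rw [hV]
      exact Finset.sum_congr rfl fun k hk => by
        simp only [Finset.mem_Icc] at hk
        rw [hpsw k, if_neg (by omega)]
    rw [e1, e2, hTsplit]; ring
  have hQ'' : ∑ k ∈ Finset.Icc 1 n, (partSum (swapSeq c 1 j) k)^2
      = Q + 2*d*U + mR * d^2 := by
    rw [icc_split 1 (j-1) n (by omega) (by omega), hj']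
    have e1 : ∑ k ∈ Finset.Icc 1 (j-1), (partSum (swapSeq c 1 j) k)^2
        = (∑ k ∈ Finset.Icc 1 (j-1), (s k)^2) + 2*d*U + mR * d^2 := by
      have hcongr : ∑ k ∈ Finset.Icc 1 (j-1), (partSum (swapSeq c 1 j) k)^2
          = ∑ k ∈ Finset.Icc 1 (j-1), (s k + d)^2 :=
        Finset.sum_congr rfl fun k hk => by
          simp only [Finset.mem_Icc] at hk
          rw [hpsw k, if_pos ⟨hk.1, by omega⟩]
      rw [hcongr]
      have expand : ∀ k, (s k + d)^2 = (s k)^2 + 2*d*(s k) + d^2 := fun k => by ring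
      rw [Finset.sum_congr rfl (fun k _ => expand k), Finset.sum_add_distrib,
        Finset.sum_add_distrib, Finset.sum_const, nsmul_eq_mul, hcardm, ← Finset.mul_sum, ← hU]
    have e2 : ∑ k ∈ Finset.Icc j n, (partSum (swapSeq c 1 j) k)^2
        = ∑ k ∈ Finset.Icc j n, (s k)^2 := by
      exact Finset.sum_congr rfl fun k hk => by
        simp only [Finset.mem_Icc] at hk
        rw [hpsw k, if_neg (by omega)]
    have hQsplit : Q = (∑ k ∈ Finset.Icc 1 (j-1), (s k)^2)
        + ∑ k ∈ Finset.Icc j n, (s k)^2 := by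
      rw [hQ, icc_split 1 (j-1) n (by omega) (by omega), hj']
    rw [e1, e2, hQsplit]; ring
  -- conclude
  have hn0 : (0:ℝ) < n := by positivity
  have hvarc : varPS n c = Q / n - (T / n)^2 := varPS_eq n (by omega) c
  have hvarsw : varPS n (swapSeq c 1 j) = (Q + 2*d*U + mR * d^2) / n - ((T + mR * d) / n)^2 := by
    rw [varPS_eq n (by omega) (swapSeq c 1 j), hT'', hQ'']
  have hdiff : varPS n (swapSeq c 1 j) - varPS n c
      = (2*d*((n:ℝ)*U - mR*T) + mR * d^2 * ((n:ℝ) - mR)) / (n:ℝ)^2 := by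
    rw [hvarc, hvarsw]
    field_simp
    ring
  have hkey : 0 < 2*d*((n:ℝ)*U - mR*T) + mR * d^2 * ((n:ℝ) - mR) := by
    have h1 : 0 < 2*d*((n:ℝ)*U - mR*T) := by
      apply mul_pos_of_neg_of_neg (by linarith) (by linarith)
    have h2 : 0 ≤ mR * d^2 * ((n:ℝ) - mR) := by
      apply mul_nonneg (mul_nonneg (by linarith) (sq_nonneg d)); linarith
    linarith
  have hlt : varPS n c < varPS n (swapSeq c 1 j) := by
    have : 0 < varPS n (swapSeq c 1 j) - varPS n c := by
      rw [hdiff]; positivity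
    linarith
  exact absurd (hopt _ harr) (not_le.mpr hlt)
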